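/- Let G be the cycle multigraph on n ≥ 4 vertices in which every pair of consecutive vertices is joined by exactly two parallel edges. Then there exists an immersion of the complete 3-uniform hypergraph K_4^3 in G. -/

import Mathlib

/-- A finite hypergraph: a finite vertex set together with a finite multiset of
hyperedges (so multi-hyperedges are allowed), each hyperedge a subset of the vertex set. -/
structure MHypergraph (V : Type) where
  verts : Finset V
  edges : Multiset (Finset V)

/-- The vertex set spanned by a collection (multiset) of hyperedges. -/
def mVerts {V : Type} [DecidableEq V] (S : Multiset (Finset V)) : Finset V :=
  S.toFinset.sup id

/-- Reachability by a Berge path using only hyperedges from `S`. -/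
def mReach {V : Type} (S : Multiset (Finset V)) (u v : V) : Prop :=
  Relation.ReflTransGen (fun a b => ∃ f ∈ S, a ∈ f ∧ b ∈ f) u v

/-- A collection of hyperedges is connected if any two of its vertices are joined
by a Berge path within it. -/
def mConnected {V : Type} [DecidableEq V] (S : Multiset (Finset V)) : Prop :=
  ∀ u ∈ mVerts S, ∀ v ∈ mVerts S, mReach S u v

/-- An immersion of the hypergraph `H` in the hypergraph `G`: an injective map of
vertices together with an assignment (encoded by the multiset `P` of pairs) sending each
hyperedge of `H` to a nonempty connected sub-hypergraph of `G` containing the images of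
its ends, such that distinct hyperedges of `H` are mapped to edge-disjoint sub-hypergraphs
(encoded by requiring that the multiset sum of all images is contained in `G.edges`). -/
def MImmersion {V1 V2 : Type} [DecidableEq V2]
    (H : MHypergraph V1) (G : MHypergraph V2) : Prop :=
  ∃ (vmap : V1 → V2) (P : Multiset (Finset V1 × Multiset (Finset V2))),
    Set.MapsTo vmap ↑H.verts ↑G.verts ∧
    Set.InjOn vmap ↑H.verts ∧
    P.map Prod.fst = H.edges ∧
    (P.map Prod.snd).sum ≤ G.edges ∧
    ∀ p ∈ P, p.2 ≠ 0 ∧ mConnected p.2 ∧ ∀ v ∈ p.1, vmap v ∈ mVerts p.2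

/-- `G'` is a subgraph of `G`: obtained by deleting vertices and/or hyperedges. -/
def IsSubgraph {V : Type} (G' G : MHypergraph V) : Prop :=
  G'.verts ⊆ G.verts ∧ G'.edges ≤ G.edges

/-- Coalescence: merge two hyperedges sharing at least one vertex into their union. -/
def CoalStep {V : Type} [DecidableEq V] (G H : MHypergraph V) : Prop :=
  ∃ (e1 e2 : Finset V) (rest : Multiset (Finset V)),
    (e1 ∩ e2).Nonempty ∧ G.edges = e1 ::ₘ e2 ::ₘ rest ∧
    H.verts = G.verts ∧ H.edges = (e1 ∪ e2) ::ₘ rest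

/-- Dewetting: detach one vertex from a hyperedge of size at least 2. -/
def DewetStep {V : Type} [DecidableEq V] (G H : MHypergraph V) : Prop :=
  ∃ (e : Finset V) (v : V) (rest : Multiset (Finset V)),
    v ∈ e ∧ 2 ≤ e.card ∧ G.edges = e ::ₘ rest ∧
    H.verts = G.verts ∧ H.edges = (e.erase v) ::ₘ rest

/-- Hypergraph isomorphism: a bijection of vertex sets inducing a bijection of
hyperedge multisets. -/
def MIso {V1 V2 : Type} [DecidableEq V2] (G : MHypergraph V1) (H : MHypergraph V2) : Prop :=
  ∃ φ : V1 → V2, Set.BijOn φ ↑G.verts ↑H.verts ∧ H.edges = G.edges.map (Finset.image φ)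

/-- The cycle multigraph on `n` vertices in which each pair of consecutive vertices
(mod `n`) is joined by exactly two parallel edges. -/
def Cyc2 (n : ℕ) (hn : 0 < n) : MHypergraph (Fin n) where
  verts := Finset.univ
  edges :=
    Finset.univ.val.map
      (fun i : Fin n => ({i, ⟨(↑i + 1) % n, Nat.mod_lt _ hn⟩} : Finset (Fin n)))
    + Finset.univ.val.map
      (fun i : Fin n => ({i, ⟨(↑i + 1) % n, Nat.mod_lt _ hn⟩} : Finset (Fin n)))

/-- `K_4^3`: the complete 3-uniform hypergraph on 4 vertices. -/
def K43 : MHypergraph (Fin 4) :=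
  ⟨Finset.univ, {({0, 1, 2} : Finset (Fin 4)), {0, 1, 3}, {0, 2, 3}, {1, 2, 3}}⟩

lemma mem_mVerts' {V : Type} [DecidableEq V] {S : Multiset (Finset V)} {a : V} :
    a ∈ mVerts S ↔ ∃ g ∈ S, a ∈ g := by
  simp [mVerts, Finset.mem_sup]

lemma mReach_symm' {V : Type} {S : Multiset (Finset V)} : Symmetric (mReach S) :=
  fun x y h => (@Relation.ReflTransGen.stdSymm _ (fun a b => ∃ f ∈ S, a ∈ f ∧ b ∈ f)
    ⟨fun _ _ ⟨g, hg, ha, hb⟩ => ⟨g, hg, hb, ha⟩⟩).symm x y h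

lemma reach_step' {V : Type} {S : Multiset (Finset V)} {a b : V} {g : Finset V}
    (hg : g ∈ S) (ha : a ∈ g) (hb : b ∈ g) : mReach S a b :=
  Relation.ReflTransGen.single ⟨g, hg, ha, hb⟩

lemma mReach_mono {V : Type} {S T : Multiset (Finset V)} (h : ∀ g ∈ S, g ∈ T) {a b : V}
    (hr : mReach S a b) : mReach T a b :=
  Relation.ReflTransGen.mono (fun _ _ ⟨g, hg, hx, hy⟩ => ⟨g, h g hg, hx, hy⟩) _ _ hr

lemma conn_of_reach {V : Type} [DecidableEq V] {S : Multiset (Finset V)} (w : V)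
    (h : ∀ u ∈ mVerts S, mReach S u w) : mConnected S := fun u hu v hv =>
  (h u hu).trans (mReach_symm' (h v hv))

set_option maxHeartbeats 1600000 in
/-- For `n ≥ 4`, there exists an immersion of `K_4^3` in the
doubled-edge cycle multigraph on `n` vertices. -/
theorem stmt11 (n : ℕ) (hn : 4 ≤ n) : MImmersion K43 (Cyc2 n (by omega)) := by
  have hpos : 0 < n := by omega
  set f : Fin n → Finset (Fin n) :=
    fun i => ({i, ⟨(↑i + 1) % n, Nat.mod_lt _ hpos⟩} : Finset (Fin n)) with hfdef
  set v0 : Fin n := ⟨0, by omega⟩ with hv0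
  set v1 : Fin n := ⟨1, by omega⟩ with hv1
  set v2 : Fin n := ⟨2, by omega⟩ with hv2
  set v3 : Fin n := ⟨3, by omega⟩ with hv3
  set M : Multiset (Finset (Fin n)) :=
    ((Finset.univ \ ({v0, v1, v2} : Finset (Fin n)))).val.map f with hM
  -- membership in the "far arc"
  have hmemS3 : ∀ i : Fin n, i ∈ Finset.univ \ ({v0, v1, v2} : Finset (Fin n)) ↔ 3 ≤ (i : ℕ) := by
    intro i
    simp only [Finset.mem_sdiff, Finset.mem_univ, true_and, Finset.mem_insert,
      Finset.mem_singleton, Fin.ext_iff, hv0, hv1, hv2]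
    omega
  have hfM : ∀ i : Fin n, 3 ≤ (i : ℕ) → f i ∈ M := by
    intro i hi
    exact Multiset.mem_map.mpr ⟨i, Finset.mem_val.mpr ((hmemS3 i).mpr hi), rfl⟩
  -- everyone on the far arc reaches v0 within M
  have key : ∀ k i, 3 ≤ i → i + k = n → ∀ j : Fin n, (j : ℕ) = i % n → mReach M j v0 := by
    intro k
    induction k with
    | zero =>
      intro i h3 he j hj
      have hin : i = n := by omega
      have hj0 : j = v0 := Fin.ext (by rw [hj, hin, Nat.mod_self, hv0])
      rw [hj0]
      exact Relation.ReflTransGen.refl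
    | succ k ih =>
      intro i h3 he j hj
      have hi : i < n := by omega
      have hji : j = ⟨i, hi⟩ := Fin.ext (by rw [hj]; exact Nat.mod_eq_of_lt hi)
      have step : mReach M j ⟨(i + 1) % n, Nat.mod_lt _ hpos⟩ := by
        apply reach_step' (hfM ⟨i, hi⟩ h3)
        · rw [hji]; simp [hfdef]
        · simp [hfdef]
      exact step.trans (ih (i + 1) (by omega) (by omega) _ rfl)
  have hcov : ∀ u : Fin n, ∀ g ∈ M, u ∈ g → mReach M u v0 := by
    intro u g hg hu
    obtain ⟨i, hi, rfl⟩ := Multiset.mem_map.mp hg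
    have h3 : 3 ≤ (i : ℕ) := (hmemS3 i).mp (Finset.mem_val.mp hi)
    simp only [hfdef, Finset.mem_insert, Finset.mem_singleton] at hu
    rcases hu with rfl | rfl
    · exact key (n - (u : ℕ)) (u : ℕ) h3 (by omega) u (Nat.mod_eq_of_lt u.isLt).symm
    · exact key (n - ((i : ℕ) + 1)) ((i : ℕ) + 1) (by omega) (by omega) _ rfl
  
  -- arithmetic helpers
  have hm1 : 1 % n = 1 := Nat.mod_eq_of_lt (by omega)
  have hm2 : 2 % n = 2 := Nat.mod_eq_of_lt (by omega)
  have hm3 : 3 % n = 3 := Nat.mod_eq_of_lt (by omega)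
  have hmn : (n - 1 + 1) % n = 0 := by rw [Nat.sub_add_cancel (by omega), Nat.mod_self]
  have c0 : ((0 : Fin 4) : ℕ) = 0 := rfl
  have c1 : ((1 : Fin 4) : ℕ) = 1 := rfl
  have c2 : ((2 : Fin 4) : ℕ) = 2 := rfl
  have c3 : ((3 : Fin 4) : ℕ) = 3 := rfl
  -- the four edge bundles
  set E1 : Multiset (Finset (Fin n)) := {f v0, f v1} with hE1
  set E2 : Multiset (Finset (Fin n)) := f v0 ::ₘ M with hE2
  set E3 : Multiset (Finset (Fin n)) := f v2 ::ₘ M with hE3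
  set E4 : Multiset (Finset (Fin n)) := {f v1, f v2} with hE4
  have connE1 : mConnected E1 := by
    apply conn_of_reach v1
    intro u hu
    rw [mem_mVerts'] at hu
    obtain ⟨g, hg, hug⟩ := hu
    apply reach_step' hg hug
    have : g = f v0 ∨ g = f v1 := by simpa [hE1] using hg
    rcases this with rfl | rfl
    · simp [hfdef, hv0, hv1, Fin.ext_iff, hm1]
    · simp [hfdef]
  have connE4 : mConnected E4 := by
    apply conn_of_reach v2
    intro u hu
    rw [mem_mVerts'] at hu
    obtain ⟨g, hg, hug⟩ := hu
    apply reach_step' hg hug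
    have : g = f v1 ∨ g = f v2 := by simpa [hE4] using hg
    rcases this with rfl | rfl
    · simp [hfdef, hv1, hv2, Fin.ext_iff, hm2]
    · simp [hfdef]
  have connE2 : mConnected E2 := by
    apply conn_of_reach v0
    intro u hu
    rw [mem_mVerts'] at hu
    obtain ⟨g, hg, hug⟩ := hu
    rcases Multiset.mem_cons.mp hg with rfl | hgM
    · exact reach_step' (Multiset.mem_cons_self _ _) hug (by simp [hfdef])
    · exact mReach_mono (fun g hg => Multiset.mem_cons_of_mem hg) (hcov u g hgM hug)
  have connE3 : mConnected E3 := by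
    apply conn_of_reach v0
    intro u hu
    rw [mem_mVerts'] at hu
    obtain ⟨g, hg, hug⟩ := hu
    have harc : mReach E3 (⟨((v2 : ℕ) + 1) % n, Nat.mod_lt _ hpos⟩ : Fin n) v0 := by
      apply mReach_mono (fun g hg => Multiset.mem_cons_of_mem hg)
      apply key (n - 3) 3 le_rfl (by omega)
      simp [hv2]
    rcases Multiset.mem_cons.mp hg with rfl | hgM
    · exact (reach_step' (Multiset.mem_cons_self _ _) hug (by simp [hfdef])).trans harc
    · exact mReach_mono (fun g hg => Multiset.mem_cons_of_mem hg) (hcov u g hgM hug)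
  -- assemble the immersion
  refine ⟨Fin.castLE hn,
    {(({0, 1, 2} : Finset (Fin 4)), E1), ({0, 1, 3}, E2), ({0, 2, 3}, E3), ({1, 2, 3}, E4)},
    ?_, ?_, ?_, ?_, ?_⟩
  · intro x _
    simp [Cyc2]
  · exact (Fin.castLE_injective hn).injOn
  · rfl
  · -- the multiset of used hyperedges is exactly the edge multiset of the doubled cycle
    have hA : Multiset.map f Finset.univ.val = f v0 ::ₘ f v1 ::ₘ f v2 ::ₘ M := by
      have hsub : ({v0, v1, v2} : Finset (Fin n)).val ≤ (Finset.univ : Finset (Fin n)).val :=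
        Finset.val_le_iff.mpr (Finset.subset_univ _)
      have huniv : (Finset.univ : Finset (Fin n)).val =
          ({v0, v1, v2} : Finset (Fin n)).val + (Finset.univ \ ({v0, v1, v2} : Finset (Fin n))).val := by
        rw [Finset.sdiff_val, add_tsub_cancel_of_le hsub]
      have hS3 : ({v0, v1, v2} : Finset (Fin n)).val = (v0 ::ₘ v1 ::ₘ {v2} : Multiset (Fin n)) := by
        rw [Finset.insert_val_of_notMem (by simp [hv0, hv1, hv2, Fin.ext_iff]),
          Finset.insert_val_of_notMem (by simp [hv1, hv2, Fin.ext_iff])]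
        rfl
      rw [huniv, Multiset.map_add, hS3, hM]
      simp [Multiset.singleton_add]
    have hGedges : (Cyc2 n (by omega : 0 < n)).edges =
        Multiset.map f Finset.univ.val + Multiset.map f Finset.univ.val := rfl
    apply le_of_eq
    rw [hGedges, hA]
    simp only [Multiset.insert_eq_cons, Multiset.map_cons, Multiset.sum_cons,
      Multiset.map_singleton, Multiset.sum_singleton, hE1, hE2, hE3, hE4]
    simp only [Multiset.insert_eq_cons, ← Multiset.singleton_add]
    abel
  · intro p hp
    have hp' := hp
    simp only [Multiset.insert_eq_cons, Multiset.mem_cons, Multiset.mem_singleton] at hp'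
    rcases hp' with rfl | rfl | rfl | rfl
    · show E1 ≠ 0 ∧ mConnected E1 ∧
        ∀ v ∈ ({0, 1, 2} : Finset (Fin 4)), Fin.castLE hn v ∈ mVerts E1
      refine ⟨by rw [hE1]; simp, connE1, ?_⟩
      intro v hv
      fin_cases hv <;> rw [mem_mVerts']
      · exact ⟨f v0, by rw [hE1]; simp, by simp [hfdef, hv0, Fin.ext_iff, c0]⟩
      · exact ⟨f v0, by rw [hE1]; simp, by simp [hfdef, hv0, hv1, Fin.ext_iff, c1, hm1]⟩
      · exact ⟨f v1, by rw [hE1]; simp, by simp [hfdef, hv1, Fin.ext_iff, c2, hm2]⟩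
    · show E2 ≠ 0 ∧ mConnected E2 ∧
        ∀ v ∈ ({0, 1, 3} : Finset (Fin 4)), Fin.castLE hn v ∈ mVerts E2
      refine ⟨by rw [hE2]; exact Multiset.cons_ne_zero, connE2, ?_⟩
      intro v hv
      fin_cases hv <;> rw [mem_mVerts']
      · exact ⟨f v0, by rw [hE2]; exact Multiset.mem_cons_self _ _,
          by simp [hfdef, hv0, Fin.ext_iff, c0]⟩
      · exact ⟨f v0, by rw [hE2]; exact Multiset.mem_cons_self _ _,
          by simp [hfdef, hv0, hv1, Fin.ext_iff, c1, hm1]⟩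
      · exact ⟨f v3, by rw [hE2]; exact Multiset.mem_cons_of_mem (hfM v3 (by simp [hv3])),
          by simp [hfdef, hv3, Fin.ext_iff, c3]⟩
    · show E3 ≠ 0 ∧ mConnected E3 ∧
        ∀ v ∈ ({0, 2, 3} : Finset (Fin 4)), Fin.castLE hn v ∈ mVerts E3
      refine ⟨by rw [hE3]; exact Multiset.cons_ne_zero, connE3, ?_⟩
      intro v hv
      fin_cases hv <;> rw [mem_mVerts']
      · exact ⟨f ⟨n - 1, by omega⟩,
          by rw [hE3]; exact Multiset.mem_cons_of_mem (hfM ⟨n - 1, by omega⟩ (by simp; omega)),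
          by simp [hfdef, hv0, Fin.ext_iff, c0, hmn]⟩
      · exact ⟨f v2, by rw [hE3]; exact Multiset.mem_cons_self _ _,
          by simp [hfdef, hv2, Fin.ext_iff, c2]⟩
      · exact ⟨f v2, by rw [hE3]; exact Multiset.mem_cons_self _ _,
          by simp [hfdef, hv2, hv3, Fin.ext_iff, c3, hm3]⟩
    · show E4 ≠ 0 ∧ mConnected E4 ∧
        ∀ v ∈ ({1, 2, 3} : Finset (Fin 4)), Fin.castLE hn v ∈ mVerts E4
      refine ⟨by rw [hE4]; simp, connE4, ?_⟩
      intro v hv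
      fin_cases hv <;> rw [mem_mVerts']
      · exact ⟨f v1, by rw [hE4]; simp, by simp [hfdef, hv1, Fin.ext_iff, c1]⟩
      · exact ⟨f v1, by rw [hE4]; simp, by simp [hfdef, hv1, hv2, Fin.ext_iff, c2, hm2]⟩
      · exact ⟨f v2, by rw [hE4]; simp, by simp [hfdef, hv2, hv3, Fin.ext_iff, c3, hm3]⟩
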